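/- Let (F_n) be a sequence of continuous quasi-linear forms on C_b(Y), Y a Polish space, which is asymptotically tight (i.e., limsup_n ρ(F_n) < +∞ and inf over compact K of limsup_n F_n(Y∖K) = −∞). If F is such that limsup_n F_n(K) ≤ F(K) for all compact K ⊂ Y, F is the extension of a continuous max-plus linear form with density bounded below, and lim_n ρ(F_n) = 0, then limsup_n F_n(C) ≤ F(C) for all closed C ⊂ Y. -/

import Mathlib

open Filter Classical in
/-- Let `(F_n)` be (extensions of) continuous quasi-linear forms on a Polish
space `Y` which are asymptotically tight, with `ρ(F_n) → 0` and
`limsup ρ(F_n) < +∞`. If `F` is the extension of a continuous max-plus linear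
form with density `f` bounded below, and `limsup F_n(K) ≤ F(K)` for all
compact `K`, then `limsup F_n(C) ≤ F(C)` for all closed `C`. -/
theorem limsup_closed_of_limsup_compact {Y : Type*} [TopologicalSpace Y]
    [PolishSpace Y]
    (Fn : ℕ → (Y → EReal) → EReal) (rho : ℕ → EReal)
    (f : Y → EReal) (c : ℝ) (hfb : ∀ y, (c : EReal) ≤ f y) :
    let ind : Set Y → Y → EReal := fun A y => if y ∈ A then (0 : EReal) else ⊥
    let F : (Y → EReal) → EReal := fun φ => ⨆ y, φ y + (-(f y))
    -- each `F_n` is isotone and quasi-linear with constant `ρ n`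
    (∀ n, Monotone (Fn n)) →
    (∀ n (φ ψ : Y → EReal), Fn n (φ ⊔ ψ) ≤ rho n + max (Fn n φ) (Fn n ψ)) →
    (atTop.limsup fun n => rho n) < ⊤ →
    Tendsto (fun n => rho n) atTop (nhds (0 : EReal)) →
    -- asymptotic tightness
    (⨅ K ∈ {K : Set Y | IsCompact K}, atTop.limsup fun n => Fn n (ind Kᶜ)) = ⊥ →
    -- compact upper bound
    (∀ K : Set Y, IsCompact K → (atTop.limsup fun n => Fn n (ind K)) ≤ F (ind K)) →
    ∀ C : Set Y, IsClosed C → (atTop.limsup fun n => Fn n (ind C)) ≤ F (ind C) := by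
  intro ind F hmono hql _hrho hrho0 htight hcomp C hC
  rw [← EReal.le_of_forall_lt_iff_le]
  intro b hb
  -- pick r between F (ind C) and b
  obtain ⟨r, hr1, hr2⟩ := EReal.exists_between_coe_real hb
  -- pick a compact K with limsup Fn (ind Kᶜ) < r
  have : ∃ K : Set Y, IsCompact K ∧ (atTop.limsup fun n => Fn n (ind Kᶜ)) < r := by
    have h := iInf_eq_bot.1 htight (r : EReal) (by simp)
    simpa [iInf_lt_iff] using h
  obtain ⟨K, hK, hKtail⟩ := this
  -- C ∩ K is compact and F (ind (C ∩ K)) ≤ F (ind C)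
  have hCK : IsCompact (C ∩ K) := hK.inter_left hC
  have hFmono : F (ind (C ∩ K)) ≤ F (ind C) := by
    refine iSup_mono fun y => add_le_add_left ?_ _
    simp only [ind]
    split_ifs with h1 h2
    · exact le_refl _
    · exact absurd h1.1 h2
    all_goals simp
  have hlimCK : (atTop.limsup fun n => Fn n (ind (C ∩ K))) < r :=
    lt_of_le_of_lt ((hcomp _ hCK).trans hFmono) hr1
  -- eventual bounds
  have e1 : ∀ᶠ n in atTop, Fn n (ind (C ∩ K)) < r :=
    eventually_lt_of_limsup_lt hlimCK
  have e2 : ∀ᶠ n in atTop, Fn n (ind Kᶜ) < r :=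
    eventually_lt_of_limsup_lt hKtail
  have hrb : (0 : EReal) < ((b - r : ℝ) : EReal) := by
    norm_cast
    exact sub_pos.2 (by exact_mod_cast hr2)
  have e3 : ∀ᶠ n in atTop, rho n < ((b - r : ℝ) : EReal) :=
    hrho0.eventually_lt_const hrb
  have key : ∀ᶠ n in atTop, Fn n (ind C) ≤ (b : EReal) := by
    filter_upwards [e1, e2, e3] with n h1 h2 h3
    have hpt : ind C ≤ ind (C ∩ K) ⊔ ind Kᶜ := by
      intro y
      simp only [ind, Pi.sup_apply]
      by_cases hy : y ∈ C
      · by_cases hyK : y ∈ K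
        · simp [hy, hyK]
        · simp [hy, hyK]
      · simp [hy]
    calc Fn n (ind C) ≤ Fn n (ind (C ∩ K) ⊔ ind Kᶜ) := hmono n hpt
      _ ≤ rho n + max (Fn n (ind (C ∩ K))) (Fn n (ind Kᶜ)) := hql n _ _
      _ ≤ ((b - r : ℝ) : EReal) + (r : EReal) :=
          add_le_add h3.le (max_le h1.le h2.le)
      _ = (b : EReal) := by
          norm_cast; ring
  exact limsup_le_of_le (by isBoundedDefault) key
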